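/- The affine implicit curve T_n(x) = T_m(y) has exactly ⌊(n−1)/2⌋·⌊(m−1)/2⌋ + ⌊n/2⌋·⌊m/2⌋ singular points, all of which are real double points; they are the solutions of (T_n(x) = T_m(y) = 2 with T_n'(x) = T_m'(y) = 0) or (T_n(x) = T_m(y) = −2 with T_n'(x) = T_m'(y) = 0). -/

import Mathlib

open Polynomial Real

/-- The monic Chebyshev polynomials of the first kind (over ℂ). -/
noncomputable def T : ℕ → Polynomial ℂ
  | 0 => 2
  | 1 => X
  | n + 2 => X * T (n + 1) - T n

lemma T_eval_key (u v : ℂ) (huv : u * v = 1) : ∀ n : ℕ,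
    (T n).eval (u + v) = u ^ n + v ^ n ∧
    (u - v) * ((T n).derivative.eval (u + v)) = n * (u ^ n - v ^ n) := by
  intro n
  induction n using Nat.twoStepInduction with
  | zero => norm_num [T]
  | one => simp [T]
  | more n ih1 ih2 =>
    obtain ⟨e1, e1'⟩ := ih1
    obtain ⟨e2, e2'⟩ := ih2
    have hT : T (n + 2) = X * T (n + 1) - T n := by simp [T]
    constructor
    · rw [hT]
      simp only [eval_sub, eval_mul, eval_X]
      rw [e2, e1]
      push_cast at e1' e2' ⊢
      linear_combination (u ^ n + v ^ n) * huv
    · rw [hT]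
      simp only [derivative_sub, derivative_mul, derivative_X, one_mul, eval_sub, eval_add,
        eval_mul, eval_X]
      push_cast at e1' e2' ⊢
      linear_combination (u - v) * e2 + (u + v) * e2' - e1' + (n : ℂ) * (u ^ n - v ^ n) * huv


lemma T_deg : ∀ n : ℕ, (T n).natDegree ≤ n ∧ (T n).coeff n = if n = 0 then 2 else 1 := by
  intro n
  induction n using Nat.twoStepInduction with
  | zero => norm_num [T]
  | one => norm_num [T]
  | more n ih1 ih2 =>
    obtain ⟨d1, c1⟩ := ih1
    obtain ⟨d2, c2⟩ := ih2
    have hT : T (n + 2) = X * T (n + 1) - T n := by simp [T]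
    constructor
    · rw [hT]
      refine le_trans (natDegree_sub_le _ _) (max_le ?_ (by omega))
      refine le_trans (natDegree_mul_le) ?_
      simp only [natDegree_X]
      omega
    · rw [hT, coeff_sub, show n + 2 = (n+1) + 1 from rfl, coeff_X_mul,
        coeff_eq_zero_of_natDegree_lt (by omega : (T n).natDegree < n + 1 + 1), c2]
      simp

lemma T_deriv_coeff (n : ℕ) (hn : 1 ≤ n) :
    ((T n).derivative.coeff (n - 1)) = n := by
  have := (T_deg n).2
  rw [if_neg (by omega)] at this
  rw [coeff_derivative, show n - 1 + 1 = n by omega, this, one_mul]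
  push_cast [Nat.cast_sub hn]
  ring

lemma T_deriv_ne (n : ℕ) (hn : 1 ≤ n) : (T n).derivative ≠ 0 := by
  intro h
  have := T_deriv_coeff n hn
  rw [h] at this
  simp at this
  have : (n : ℂ) ≠ 0 := Nat.cast_ne_zero.mpr (by omega)
  exact this (by exact_mod_cast ‹(0:ℂ) = n›.symm)

lemma T_deriv_deg (n : ℕ) (hn : 1 ≤ n) : (T n).derivative.natDegree ≤ n - 1 := by
  rcases Nat.eq_or_lt_of_le hn with h | h
  · rw [show T n = T 1 from by rw [← h], show T 1 = X from rfl]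
    simp
  · have h2 : (T n).natDegree ≤ n := (T_deg n).1
    calc (T n).derivative.natDegree ≤ (T n).natDegree - 1 := natDegree_derivative_le _
      _ ≤ n - 1 := by omega



noncomputable def th (n k : ℕ) : ℝ := k * Real.pi / n

noncomputable def xc (n k : ℕ) : ℂ := ((2 * Real.cos (th n k) : ℝ) : ℂ)

lemma xc_eq (n k : ℕ) : xc n k = Complex.exp (th n k * Complex.I) + Complex.exp (-(th n k * Complex.I)) := by
  rw [xc]
  push_cast
  rw [Complex.cos]
  ring

lemma exp_mul_exp_neg (z : ℂ) : Complex.exp z * Complex.exp (-z) = 1 := by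
  rw [← Complex.exp_add]; simp

lemma exp_th_pow (n k : ℕ) (hn : 1 ≤ n) : Complex.exp (th n k * Complex.I) ^ n = (-1) ^ k := by
  rw [← Complex.exp_nat_mul]
  have : (n : ℂ) * (th n k * Complex.I) = k * (Real.pi * Complex.I) := by
    have hn' : (n : ℂ) ≠ 0 := Nat.cast_ne_zero.mpr (by omega)
    rw [th]
    push_cast
    field_simp
  rw [this, Complex.exp_nat_mul, Complex.exp_pi_mul_I]

lemma uv_one (n k : ℕ) : Complex.exp (th n k * Complex.I) * Complex.exp (-(th n k * Complex.I)) = 1 :=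
  exp_mul_exp_neg _

lemma exp_th_neg_pow (n k : ℕ) (hn : 1 ≤ n) :
    Complex.exp (-(th n k * Complex.I)) ^ n = (-1) ^ k := by
  have h1 : Complex.exp (th n k * Complex.I) ^ n * Complex.exp (-(th n k * Complex.I)) ^ n = 1 := by
    rw [← mul_pow, uv_one, one_pow]
  rw [exp_th_pow n k hn] at h1
  rcases Nat.even_or_odd k with h | h
  · rw [h.neg_one_pow] at h1 ⊢; simpa using h1
  · rw [h.neg_one_pow] at h1 ⊢; linear_combination -h1

lemma T_eval_xc (n k : ℕ) (hn : 1 ≤ n) : (T n).eval (xc n k) = (-1) ^ k * 2 := by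
  rw [xc_eq]
  rw [(T_eval_key _ _ (uv_one n k) n).1, exp_th_pow n k hn, exp_th_neg_pow n k hn]
  ring

lemma th_mem (n k : ℕ) (hk : k ∈ Finset.Ioo 0 n) : 0 < th n k ∧ th n k < Real.pi := by
  simp only [Finset.mem_Ioo] at hk
  have hk1 : (0:ℝ) < k := by exact_mod_cast hk.1
  have hn1 : (0:ℝ) < n := by exact_mod_cast hk.1.trans hk.2
  simp only [th]
  constructor
  · exact div_pos (mul_pos hk1 Real.pi_pos) hn1
  · rw [div_lt_iff₀ hn1]
    have : (k : ℝ) < n := by exact_mod_cast hk.2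
    nlinarith [Real.pi_pos]

lemma u_sub_v_ne (n k : ℕ) (hk : k ∈ Finset.Ioo 0 n) :
    Complex.exp (th n k * Complex.I) - Complex.exp (-(th n k * Complex.I)) ≠ 0 := by
  have h : Complex.exp (th n k * Complex.I) - Complex.exp (-(th n k * Complex.I))
      = 2 * Complex.I * Complex.sin (th n k) := by
    rw [Complex.sin]
    ring_nf
    rw [Complex.I_sq]
    ring
  rw [h]
  obtain ⟨h1, h2⟩ := th_mem n k hk
  have hs : Real.sin (th n k) > 0 := Real.sin_pos_of_pos_of_lt_pi h1 h2
  have : Complex.sin ((th n k : ℝ) : ℂ) = ((Real.sin (th n k) : ℝ) : ℂ) := by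
    rw [Complex.ofReal_sin]
  simp only [ne_eq, mul_eq_zero, Complex.I_ne_zero, or_false, false_or]
  rw [this]
  rintro (hc | hc)
  · norm_num at hc
  · rw [Complex.ofReal_eq_zero] at hc; linarith

lemma T_deriv_xc (n k : ℕ) (hk : k ∈ Finset.Ioo 0 n) :
    (T n).derivative.eval (xc n k) = 0 := by
  have hn : 1 ≤ n := by
    simp only [Finset.mem_Ioo] at hk; omega
  have key := (T_eval_key _ _ (uv_one n k) n).2
  rw [exp_th_pow n k hn, exp_th_neg_pow n k hn, sub_self, mul_zero] at key
  rw [← xc_eq] at key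
  exact (mul_eq_zero.mp key).resolve_left (u_sub_v_ne n k hk)


lemma xc_injOn (n : ℕ) : ∀ k ∈ Finset.Ioo 0 n, ∀ l ∈ Finset.Ioo 0 n,
    xc n k = xc n l → k = l := by
  intro k hk l hl h
  have hk' := th_mem n k hk
  have hl' := th_mem n l hl
  have : th n k = th n l := by
    apply Real.injOn_cos ⟨hk'.1.le, hk'.2.le⟩ ⟨hl'.1.le, hl'.2.le⟩
    rw [xc, xc] at h
    have h2 : (2:ℝ) * Real.cos (th n k) = 2 * Real.cos (th n l) := by exact_mod_cast h
    linarith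
  have hn1 : (0:ℝ) < n := by
    simp only [Finset.mem_Ioo] at hk; exact_mod_cast hk.1.trans hk.2
  simp only [th] at this
  field_simp at this
  exact_mod_cast this

noncomputable def En (n : ℕ) : Finset ℂ := (Finset.Ioo 0 n).image (xc n)

lemma En_card (n : ℕ) : (En n).card = n - 1 := by
  rw [En, Finset.card_image_of_injOn (fun k hk l hl => xc_injOn n k hk l hl), Nat.card_Ioo]
  omega

lemma deriv_zero_set (n : ℕ) (hn : 1 ≤ n) :
    {x : ℂ | (T n).derivative.eval x = 0} = ↑(En n) := by
  have hD := T_deriv_ne n hn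
  have hsub : En n ⊆ (T n).derivative.roots.toFinset := by
    intro x hx
    rw [En, Finset.mem_image] at hx
    obtain ⟨k, hk, rfl⟩ := hx
    rw [Multiset.mem_toFinset, mem_roots hD]
    exact T_deriv_xc n k hk
  have hcard : (T n).derivative.roots.toFinset.card ≤ (En n).card := by
    rw [En_card]
    calc (T n).derivative.roots.toFinset.card ≤ Multiset.card (T n).derivative.roots :=
          Multiset.toFinset_card_le _
      _ ≤ (T n).derivative.natDegree := (T n).derivative.card_roots' 
      _ ≤ n - 1 := T_deriv_deg n hn
  have heq := Finset.eq_of_subset_of_card_le hsub hcard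
  ext x
  simp only [Set.mem_setOf_eq, Finset.mem_coe]
  rw [heq, Multiset.mem_toFinset, mem_roots hD]
  exact Iff.rfl

noncomputable def Fp (n : ℕ) : Finset ℂ := ((Finset.Ioo 0 n).filter (fun k => Even k)).image (xc n)
noncomputable def Fm (n : ℕ) : Finset ℂ := ((Finset.Ioo 0 n).filter (fun k => ¬ Even k)).image (xc n)

lemma even_card (n : ℕ) : ((Finset.Ioo 0 n).filter (fun k => Even k)).card = (n - 1) / 2 := by
  have h : ((Finset.Ioo 0 n).filter (fun k => Even k))
      = (Finset.Icc 1 ((n - 1) / 2)).image (fun j => 2 * j) := by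
    ext k
    simp only [Finset.mem_filter, Finset.mem_Ioo, Finset.mem_image, Finset.mem_Icc]
    constructor
    · rintro ⟨⟨h0, hn⟩, r, hr⟩
      exact ⟨r, ⟨by omega, by omega⟩, by omega⟩
    · rintro ⟨j, ⟨h1, h2⟩, rfl⟩
      exact ⟨⟨by omega, by omega⟩, ⟨j, by omega⟩⟩
  rw [h, Finset.card_image_of_injective _ (fun a b hab => by omega), Nat.card_Icc]
  omega

lemma odd_card (n : ℕ) : ((Finset.Ioo 0 n).filter (fun k => ¬ Even k)).card = n / 2 := by
  have h : ((Finset.Ioo 0 n).filter (fun k => ¬ Even k))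
      = (Finset.range (n / 2)).image (fun j => 2 * j + 1) := by
    ext k
    simp only [Finset.mem_filter, Finset.mem_Ioo, Finset.mem_image, Finset.mem_range]
    constructor
    · rintro ⟨⟨h0, hn⟩, hodd⟩
      rw [Nat.not_even_iff] at hodd
      exact ⟨k / 2, by omega, by omega⟩
    · rintro ⟨j, hj, rfl⟩
      refine ⟨⟨by omega, by omega⟩, by rw [Nat.not_even_iff]; omega⟩
  rw [h, Finset.card_image_of_injective _ (fun a b hab => by omega), Finset.card_range]

lemma Fp_card (n : ℕ) : (Fp n).card = (n - 1) / 2 := by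
  rw [Fp, Finset.card_image_of_injOn (fun k hk l hl => xc_injOn n k (Finset.filter_subset _ _ hk)
    l (Finset.filter_subset _ _ hl)), even_card]

lemma Fm_card (n : ℕ) : (Fm n).card = n / 2 := by
  rw [Fm, Finset.card_image_of_injOn (fun k hk l hl => xc_injOn n k (Finset.filter_subset _ _ hk)
    l (Finset.filter_subset _ _ hl)), odd_card]

lemma mem_Fp {n : ℕ} {x : ℂ} (hx : x ∈ Fp n) :
    x.im = 0 ∧ (T n).eval x = 2 ∧ (T n).derivative.eval x = 0 := by
  rw [Fp, Finset.mem_image] at hx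
  obtain ⟨k, hk, rfl⟩ := hx
  rw [Finset.mem_filter] at hk
  have hn : 1 ≤ n := by
    have := hk.1; simp only [Finset.mem_Ioo] at this; omega
  refine ⟨by simp [xc], ?_, T_deriv_xc n k hk.1⟩
  rw [T_eval_xc n k hn, hk.2.neg_one_pow, one_mul]

lemma mem_Fm {n : ℕ} {x : ℂ} (hx : x ∈ Fm n) :
    x.im = 0 ∧ (T n).eval x = -2 ∧ (T n).derivative.eval x = 0 := by
  rw [Fm, Finset.mem_image] at hx
  obtain ⟨k, hk, rfl⟩ := hx
  rw [Finset.mem_filter] at hk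
  have hn : 1 ≤ n := by
    have := hk.1; simp only [Finset.mem_Ioo] at this; omega
  refine ⟨by simp [xc], ?_, T_deriv_xc n k hk.1⟩
  rw [T_eval_xc n k hn, (Nat.not_even_iff_odd.mp hk.2).neg_one_pow]
  ring

lemma crit_cases (n : ℕ) (hn : 1 ≤ n) (x : ℂ) (hx : (T n).derivative.eval x = 0) :
    x ∈ Fp n ∨ x ∈ Fm n := by
  have hxE : x ∈ (En n : Set ℂ) := by
    rw [← deriv_zero_set n hn]; exact hx
  rw [Finset.mem_coe, En, Finset.mem_image] at hxE
  obtain ⟨k, hk, rfl⟩ := hxE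
  rcases Nat.even_or_odd k with h | h
  · left; rw [Fp, Finset.mem_image]
    exact ⟨k, Finset.mem_filter.mpr ⟨hk, h⟩, rfl⟩
  · right; rw [Fm, Finset.mem_image]
    exact ⟨k, Finset.mem_filter.mpr ⟨hk, Nat.not_even_iff_odd.mpr h⟩, rfl⟩

theorem implicit_chebyshev_singular_points (n m : ℕ) (hn : 1 ≤ n) (hm : 1 ≤ m)
    (S : Set (ℂ × ℂ))
    (hS : S = {p : ℂ × ℂ | (T n).eval p.1 = (T m).eval p.2 ∧
      ((T n).derivative).eval p.1 = 0 ∧ ((T m).derivative).eval p.2 = 0}) :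
    S.ncard = ((n - 1) / 2) * ((m - 1) / 2) + (n / 2) * (m / 2) ∧
    ∀ p ∈ S, (p.1.im = 0 ∧ p.2.im = 0) ∧
      (((T n).eval p.1 = 2 ∧ (T m).eval p.2 = 2) ∨
       ((T n).eval p.1 = -2 ∧ (T m).eval p.2 = -2)) := by
  have hSeq : S = ↑((Fp n ×ˢ Fp m) ∪ (Fm n ×ˢ Fm m)) := by
    rw [hS]
    ext p
    simp only [Set.mem_setOf_eq, Finset.coe_union, Set.mem_union, Finset.mem_coe,
      Finset.mem_union, Finset.mem_product]
    constructor
    · rintro ⟨heq, h1, h2⟩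
      rcases crit_cases n hn p.1 h1 with hp1 | hp1 <;>
        rcases crit_cases m hm p.2 h2 with hp2 | hp2
      · exact Or.inl ⟨hp1, hp2⟩
      · rw [(mem_Fp hp1).2.1, (mem_Fm hp2).2.1] at heq; norm_num at heq
      · rw [(mem_Fm hp1).2.1, (mem_Fp hp2).2.1] at heq; norm_num at heq
      · exact Or.inr ⟨hp1, hp2⟩
    · rintro (⟨hp1, hp2⟩ | ⟨hp1, hp2⟩)
      · exact ⟨by rw [(mem_Fp hp1).2.1, (mem_Fp hp2).2.1], (mem_Fp hp1).2.2, (mem_Fp hp2).2.2⟩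
      · exact ⟨by rw [(mem_Fm hp1).2.1, (mem_Fm hp2).2.1], (mem_Fm hp1).2.2, (mem_Fm hp2).2.2⟩
  constructor
  · rw [hSeq, Set.ncard_coe_finset]
    have hdisj : Disjoint (Fp n ×ˢ Fp m) (Fm n ×ˢ Fm m) := by
      rw [Finset.disjoint_left]
      rintro ⟨a, b⟩ h1 h2
      rw [Finset.mem_product] at h1 h2
      have e1 := (mem_Fp h1.1).2.1
      have e2 := (mem_Fm h2.1).2.1
      rw [e1] at e2
      norm_num at e2
    rw [Finset.card_union_of_disjoint hdisj, Finset.card_product, Finset.card_product,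
      Fp_card, Fp_card, Fm_card, Fm_card]
  · intro p hp
    rw [hSeq] at hp
    simp only [Finset.coe_union, Set.mem_union, Finset.mem_coe, Finset.mem_union,
      Finset.mem_product] at hp
    rcases hp with ⟨hp1, hp2⟩ | ⟨hp1, hp2⟩
    · exact ⟨⟨(mem_Fp hp1).1, (mem_Fp hp2).1⟩, Or.inl ⟨(mem_Fp hp1).2.1, (mem_Fp hp2).2.1⟩⟩
    · exact ⟨⟨(mem_Fm hp1).1, (mem_Fm hp2).1⟩, Or.inr ⟨(mem_Fm hp1).2.1, (mem_Fm hp2).2.1⟩⟩
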